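/- Under the stated hypotheses, the piecewise differences of the local averages satisfy τ · Σ_{k=1}^m ‖(f_k − f_{k−1})/τ‖² ≤ 4 ∫_0^T ‖g(s)‖² ds. -/

import Mathlib

open MeasureTheory

lemma cs_aux {μ : Measure ℝ} [IsFiniteMeasure μ] {h : ℝ → ℝ}
    (hmeas : AEStronglyMeasurable h μ) (hnn : ∀ x, 0 ≤ h x)
    (hsq : Integrable (fun x => h x ^ 2) μ) :
    (∫ x, h x ∂μ) ^ 2 ≤ (μ Set.univ).toReal * ∫ x, h x ^ 2 ∂μ := by
  have h2 : MemLp h 2 μ := (memLp_two_iff_integrable_sq hmeas).2 hsq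
  have hone : MemLp (fun _ : ℝ => (1 : ℝ)) 2 μ := memLp_const 1
  have hpq : (2 : ℝ).HolderConjugate 2 := Real.HolderConjugate.two_two
  have hH := integral_mul_le_Lp_mul_Lq_of_nonneg hpq
    (Filter.Eventually.of_forall hnn)
    (Filter.Eventually.of_forall (fun _ => zero_le_one))
    (by simpa using h2) (by simpa using hone)
  simp only [mul_one] at hH
  have hA : 0 ≤ ∫ x, h x ^ (2:ℝ) ∂μ :=
    integral_nonneg fun x => Real.rpow_nonneg (hnn x) _
  have hB : 0 ≤ ∫ _ : ℝ, (1:ℝ) ^ (2:ℝ) ∂μ := integral_nonneg fun x => by positivity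
  have hInn : 0 ≤ ∫ x, h x ∂μ := integral_nonneg hnn
  have := pow_le_pow_left₀ hInn hH 2
  calc (∫ x, h x ∂μ) ^ 2
      ≤ ((∫ x, h x ^ (2:ℝ) ∂μ) ^ (1/(2:ℝ)) * (∫ _ : ℝ, (1:ℝ) ^ (2:ℝ) ∂μ) ^ (1/(2:ℝ))) ^ 2 := this
    _ = (∫ x, h x ^ (2:ℝ) ∂μ) * ∫ _ : ℝ, (1:ℝ) ^ (2:ℝ) ∂μ := by
        rw [mul_pow, ← Real.rpow_natCast ((∫ x, h x ^ (2:ℝ) ∂μ) ^ (1/(2:ℝ))) 2,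
          ← Real.rpow_natCast ((∫ _ : ℝ, (1:ℝ) ^ (2:ℝ) ∂μ) ^ (1/(2:ℝ))) 2,
          ← Real.rpow_mul hA, ← Real.rpow_mul hB]
        norm_num
    _ = (μ Set.univ).toReal * ∫ x, h x ^ 2 ∂μ := by
        simp only [Real.one_rpow, integral_const, smul_eq_mul, mul_one]
        rw [mul_comm]
        congr 1
        refine integral_congr_ae (Filter.Eventually.of_forall fun x => ?_)
        show h x ^ (2:ℝ) = h x ^ (2:ℕ)
        rw [← Real.rpow_natCast (h x) 2]
        norm_num

lemma cs_interval {a b : ℝ} (hab : a ≤ b) {h : ℝ → ℝ}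
    (hmeas : AEStronglyMeasurable h (volume.restrict (Set.Ioc a b)))
    (hnn : ∀ x, 0 ≤ h x)
    (hsq : IntegrableOn (fun x => h x ^ 2) (Set.Ioc a b)) :
    (∫ x in a..b, h x) ^ 2 ≤ (b - a) * ∫ x in a..b, h x ^ 2 := by
  haveI : IsFiniteMeasure (volume.restrict (Set.Ioc a b)) :=
    ⟨by rw [Measure.restrict_apply_univ]; exact measure_Ioc_lt_top⟩
  have := cs_aux hmeas hnn hsq
  rw [intervalIntegral.integral_of_le hab, intervalIntegral.integral_of_le hab]
  simpa [Measure.restrict_apply_univ, Real.volume_Ioc, ENNReal.toReal_ofReal (sub_nonneg.2 hab)]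
    using this

set_option maxHeartbeats 1000000 in
/-- If `f ∈ W^{1,2}(0,T;E)` with weak derivative `g`, i.e. `f(t) = f(0) + ∫_0^t g(s) ds`,
and `f_0 = f(0)`, `f_k = (1/τ) ∫_{t_{k-1}}^{t_k} f(s) ds` for `k = 1,…,m` with `τ = T/m`,
`t_k = kτ`, then `τ · Σ_{k=1}^m ‖(f_k − f_{k−1})/τ‖² ≤ 4 ∫_0^T ‖g(s)‖² ds`. -/
theorem discrete_difference_quotient_bound
    {E : Type*} [NormedAddCommGroup E] [NormedSpace ℝ E] [CompleteSpace E]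
    (T : ℝ) (hT : 0 < T) (m : ℕ) (hm : 1 ≤ m) (τ : ℝ) (hτ : τ = T / m)
    (g : ℝ → E) (f : ℝ → E) (fk : ℕ → E)
    (hg_meas : AEStronglyMeasurable g (volume.restrict (Set.Ioc (0:ℝ) T)))
    (hg_sq : IntegrableOn (fun s => ‖g s‖ ^ 2) (Set.Ioc (0:ℝ) T))
    (hf : ∀ t ∈ Set.Icc (0:ℝ) T, f t = f 0 + ∫ s in (0:ℝ)..t, g s)
    (hfk0 : fk 0 = f 0)
    (hfk : ∀ k : ℕ, 1 ≤ k → k ≤ m →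
      fk k = (1 / τ) • ∫ s in (((k - 1 : ℕ) : ℝ) * τ)..((k : ℝ) * τ), f s) :
    τ * ∑ k ∈ Finset.Icc 1 m, ‖(1 / τ) • (fk k - fk (k - 1))‖ ^ 2
      ≤ 4 * ∫ s in (0:ℝ)..T, ‖g s‖ ^ 2 := by
  have hm' : (1:ℝ) ≤ (m:ℝ) := by exact_mod_cast hm
  have hm0 : (0:ℝ) < (m:ℝ) := by linarith
  have hτ0 : 0 < τ := by rw [hτ]; positivity
  have hmτ : (m:ℝ) * τ = T := by rw [hτ]; field_simp
  -- integrability of g, ‖g‖, ‖g‖² on subintervals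
  have hg_int : IntegrableOn g (Set.Ioc 0 T) := by
    have hone : IntegrableOn (fun _ : ℝ => (1:ℝ)) (Set.Ioc 0 T) :=
      integrableOn_const measure_Ioc_lt_top.ne
    have hbd : IntegrableOn (fun s => 1 + ‖g s‖^2) (Set.Ioc 0 T) := hone.add hg_sq
    refine Integrable.mono' hbd hg_meas ?_
    exact Filter.Eventually.of_forall fun s => by
      nlinarith [sq_nonneg (‖g s‖ - 1), norm_nonneg (g s)]
  have hgI : ∀ a b, 0 ≤ a → a ≤ b → b ≤ T → IntervalIntegrable g volume a b :=
    fun a b h0 hab hbT => (intervalIntegrable_iff_integrableOn_Ioc_of_le hab).2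
      (hg_int.mono_set (Set.Ioc_subset_Ioc h0 hbT))
  have hgnI : ∀ a b, 0 ≤ a → a ≤ b → b ≤ T →
      IntervalIntegrable (fun s => ‖g s‖) volume a b :=
    fun a b h0 hab hbT => (intervalIntegrable_iff_integrableOn_Ioc_of_le hab).2
      ((hg_int.mono_set (Set.Ioc_subset_Ioc h0 hbT)).norm)
  have hgsqI : ∀ a b, 0 ≤ a → a ≤ b → b ≤ T →
      IntervalIntegrable (fun s => ‖g s‖ ^ 2) volume a b :=
    fun a b h0 hab hbT => (intervalIntegrable_iff_integrableOn_Ioc_of_le hab).2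
      (hg_sq.mono_set (Set.Ioc_subset_Ioc h0 hbT))
  have hgn_meas : ∀ a b, 0 ≤ a → b ≤ T →
      AEStronglyMeasurable (fun s => ‖g s‖) (volume.restrict (Set.Ioc a b)) :=
    fun a b h0 hbT => (hg_meas.mono_measure
      (Measure.restrict_mono (Set.Ioc_subset_Ioc h0 hbT) le_rfl)).norm
  -- additivity of the primitive
  have hFsub : ∀ a b, 0 ≤ a → a ≤ b → b ≤ T →
      (∫ s in (0:ℝ)..b, g s) - ∫ s in (0:ℝ)..a, g s = ∫ s in a..b, g s := by
    intro a b h0 hab hbT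
    rw [← intervalIntegral.integral_add_adjacent_intervals
      (hgI 0 a le_rfl h0 (hab.trans hbT)) (hgI a b h0 hab hbT)]
    abel
  -- continuity / integrability of f
  have hgT : IntervalIntegrable g volume 0 T := hgI 0 T le_rfl hT.le le_rfl
  have hFc : ContinuousOn (fun t => ∫ s in (0:ℝ)..t, g s) (Set.Icc 0 T) := by
    have := intervalIntegral.continuousOn_primitive_interval' hgT
      (by simp [Set.uIcc_of_le hT.le, hT.le] : (0:ℝ) ∈ Set.uIcc 0 T)
    rwa [Set.uIcc_of_le hT.le] at this
  have hfc : ContinuousOn f (Set.Icc 0 T) :=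
    (continuousOn_const.add hFc).congr fun t ht => hf t ht
  have hfI : ∀ a b, 0 ≤ a → a ≤ b → b ≤ T → IntervalIntegrable f volume a b :=
    fun a b h0 hab hbT =>
      (hfc.mono (Set.Icc_subset_Icc h0 hbT)).intervalIntegrable_of_Icc hab
  -- norm/smul algebra
  have hsmul : ∀ Δ : E, τ * ‖(1/τ) • Δ‖ ^ 2 = ‖Δ‖ ^ 2 / τ := by
    intro Δ
    rw [norm_smul, Real.norm_eq_abs, abs_of_pos (by positivity : (0:ℝ) < 1/τ)]
    field_simp
  -- the pieces
  set A : ℕ → ℝ := fun i => ∫ s in ((i:ℝ)*τ)..(((i:ℝ)+1)*τ), ‖g s‖^2 with hA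
  have hA0 : ∀ i, 0 ≤ A i := fun i =>
    intervalIntegral.integral_nonneg (by nlinarith [Nat.cast_nonneg (α := ℝ) i])
      (fun _ _ => sq_nonneg _)
  -- the key per-step estimate
  have key : ∀ k, 1 ≤ k → k ≤ m →
      τ * ‖(1/τ) • (fk k - fk (k-1))‖ ^ 2
        ≤ 2 * ((if k = 1 then 0 else A (k-2)) + A (k-1)) := by
    intro k hk1 hkm
    have hk1' : (1:ℝ) ≤ (k:ℝ) := by exact_mod_cast hk1
    have hkm' : (k:ℝ) ≤ (m:ℝ) := by exact_mod_cast hkm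
    have hkT : (k:ℝ)*τ ≤ T := by nlinarith
    have hc1 : ((k-1:ℕ):ℝ) = (k:ℝ)-1 := by rw [Nat.cast_sub hk1, Nat.cast_one]
    have hAk1 : A (k-1) = ∫ s in (((k:ℝ)-1)*τ)..((k:ℝ)*τ), ‖g s‖^2 := by
      simp only [hA, hc1]
      rw [show ((k:ℝ)-1+1)*τ = (k:ℝ)*τ by ring]
    rcases eq_or_lt_of_le hk1 with h1 | h2
    · -- k = 1
      subst h1
      have hτT : τ ≤ T := by nlinarith
      have hfk1 : fk 1 = (1/τ) • ∫ s in (0:ℝ)..τ, f s := by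
        have := hfk 1 le_rfl hm
        simpa using this
      have hΔ : fk 1 - fk 0 = (1/τ) • ∫ s in (0:ℝ)..τ, (f s - f 0) := by
        rw [hfk1, hfk0,
          intervalIntegral.integral_sub (hfI 0 τ le_rfl hτ0.le hτT) intervalIntegrable_const,
          intervalIntegral.integral_const, smul_sub, sub_zero, smul_smul]
        have h1τ : 1/τ * τ = 1 := by field_simp
        rw [h1τ, one_smul]
      set C := ∫ s in (0:ℝ)..τ, ‖g s‖ with hC
      have hC0 : 0 ≤ C :=
        intervalIntegral.integral_nonneg hτ0.le (fun _ _ => norm_nonneg _)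
      have hbound : ∀ s ∈ Set.uIoc (0:ℝ) τ, ‖f s - f 0‖ ≤ C := by
        intro s hs
        rw [Set.uIoc_of_le hτ0.le] at hs
        have hs0 : 0 < s := hs.1
        have hsτ : s ≤ τ := hs.2
        rw [hf s ⟨hs0.le, hsτ.trans hτT⟩, add_sub_cancel_left]
        calc ‖∫ r in (0:ℝ)..s, g r‖
            ≤ ∫ r in (0:ℝ)..s, ‖g r‖ :=
              intervalIntegral.norm_integral_le_integral_norm hs0.le
          _ ≤ C := intervalIntegral.integral_mono_interval le_rfl hs0.le hsτ
              (Filter.Eventually.of_forall fun r => norm_nonneg _)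
              (hgnI 0 τ le_rfl hτ0.le hτT)
      have hΔle : ‖fk 1 - fk 0‖ ≤ C := by
        rw [hΔ, norm_smul, Real.norm_eq_abs, abs_of_pos (by positivity : (0:ℝ) < 1/τ)]
        have h2 := intervalIntegral.norm_integral_le_of_norm_le_const hbound
        rw [sub_zero, abs_of_pos hτ0] at h2
        calc 1/τ * ‖∫ s in (0:ℝ)..τ, (f s - f 0)‖
            ≤ 1/τ * (C * τ) := by
              exact mul_le_mul_of_nonneg_left h2 (by positivity)
          _ = C := by field_simp
      have hCS : C^2 ≤ τ * ∫ s in (0:ℝ)..τ, ‖g s‖^2 := by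
        have := cs_interval hτ0.le (hgn_meas 0 τ le_rfl hτT)
          (fun x => norm_nonneg _)
          (hg_sq.mono_set (Set.Ioc_subset_Ioc le_rfl hτT))
        simpa using this
      have hAeq : A 0 = ∫ s in (0:ℝ)..τ, ‖g s‖^2 := by
        rw [hA]; norm_num
      rw [hsmul, if_pos rfl]
      show ‖fk 1 - fk 0‖^2 / τ ≤ 2 * (0 + A (1-1))
      rw [div_le_iff₀ hτ0, hAeq]
      have hsq' : ‖fk 1 - fk 0‖^2 ≤ C^2 := pow_le_pow_left₀ (norm_nonneg _) hΔle 2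
      have hI0 : 0 ≤ ∫ s in (0:ℝ)..τ, ‖g s‖^2 :=
        intervalIntegral.integral_nonneg hτ0.le fun _ _ => sq_nonneg _
      nlinarith
    · -- 2 ≤ k
      have hk2 : 2 ≤ k := h2
      have hk2' : (2:ℝ) ≤ (k:ℝ) := by exact_mod_cast hk2
      set a1 : ℝ := ((k:ℝ)-2)*τ with ha1d
      set a2 : ℝ := ((k:ℝ)-1)*τ with ha2d
      set a3 : ℝ := (k:ℝ)*τ with ha3d
      have ha1 : 0 ≤ a1 := by rw [ha1d]; nlinarith
      have h12 : a1 ≤ a2 := by rw [ha1d, ha2d]; nlinarith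
      have h23 : a2 ≤ a3 := by rw [ha2d, ha3d]; nlinarith
      have ha3T : a3 ≤ T := hkT
      have ha2T : a2 ≤ T := h23.trans ha3T
      have hτa2 : τ ≤ a2 := by rw [ha2d]; nlinarith
      have e21 : a2 - τ = a1 := by rw [ha1d, ha2d]; ring
      have e32 : a3 - τ = a2 := by rw [ha2d, ha3d]; ring
      have e1 : fk k = (1/τ) • ∫ s in a2..a3, f s := by
        rw [hfk k hk1 hkm, ha2d, ha3d, Nat.cast_sub hk1, Nat.cast_one]
      have e1' : fk (k-1) = (1/τ) • ∫ s in a1..a2, f s := by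
        rw [hfk (k-1) (by omega) (by omega), ha1d, ha2d,
          show k-1-1 = k-2 from by omega,
          Nat.cast_sub hk2, Nat.cast_sub hk1, Nat.cast_one]
        norm_num
      have e2 : ∫ s in a1..a2, f s = ∫ s in a2..a3, f (s - τ) := by
        have := intervalIntegral.integral_comp_sub_right (a := a2) (b := a3) f τ
        rw [e21, e32] at this
        exact this.symm
      have hfshift : IntervalIntegrable (fun s => f (s - τ)) volume a2 a3 := by
        have h3 := (hfI a1 a2 ha1 h12 ha2T).comp_sub_right τ
        rwa [show a1 + τ = a2 by rw [← e21]; ring, show a2 + τ = a3 by rw [← e32]; ring] at h3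
      have hΔ : fk k - fk (k-1) = (1/τ) • ∫ s in a2..a3, (f s - f (s - τ)) := by
        rw [e1, e1', e2, ← smul_sub,
          ← intervalIntegral.integral_sub (hfI a2 a3 (ha1.trans h12) h23 ha3T) hfshift]
      set C := ∫ s in a1..a3, ‖g s‖ with hC
      have hC0 : 0 ≤ C :=
        intervalIntegral.integral_nonneg (h12.trans h23) (fun _ _ => norm_nonneg _)
      have hbound : ∀ s ∈ Set.uIoc a2 a3, ‖f s - f (s - τ)‖ ≤ C := by
        intro s hs
        rw [Set.uIoc_of_le h23] at hs
        have hs1 : a2 < s := hs.1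
        have hs2 : s ≤ a3 := hs.2
        have h0sτ : 0 ≤ s - τ := by linarith
        have hsT : s ≤ T := hs2.trans ha3T
        have h0s : 0 ≤ s := by linarith [hτ0.le]
        rw [hf s ⟨h0s, hsT⟩, hf (s - τ) ⟨h0sτ, by linarith⟩, add_sub_add_left_eq_sub,
          hFsub (s - τ) s h0sτ (by linarith [hτ0.le]) hsT]
        calc ‖∫ r in (s - τ)..s, g r‖
            ≤ ∫ r in (s - τ)..s, ‖g r‖ :=
              intervalIntegral.norm_integral_le_integral_norm (by linarith [hτ0.le])
          _ ≤ C := intervalIntegral.integral_mono_interval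
              (by linarith : a1 ≤ s - τ) (by linarith [hτ0.le]) hs2
              (Filter.Eventually.of_forall fun r => norm_nonneg _)
              (hgnI a1 a3 ha1 (h12.trans h23) ha3T)
      have hΔle : ‖fk k - fk (k-1)‖ ≤ C := by
        rw [hΔ, norm_smul, Real.norm_eq_abs, abs_of_pos (by positivity : (0:ℝ) < 1/τ)]
        have h3 := intervalIntegral.norm_integral_le_of_norm_le_const hbound
        rw [show a3 - a2 = τ by rw [← e32]; ring, abs_of_pos hτ0] at h3
        calc 1/τ * ‖∫ s in a2..a3, (f s - f (s - τ))‖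
            ≤ 1/τ * (C * τ) := mul_le_mul_of_nonneg_left h3 (by positivity)
          _ = C := by field_simp
      have hCS : C^2 ≤ (a3 - a1) * ∫ s in a1..a3, ‖g s‖^2 :=
        cs_interval (h12.trans h23) (hgn_meas a1 a3 ha1 ha3T)
          (fun x => norm_nonneg _)
          (hg_sq.mono_set (Set.Ioc_subset_Ioc ha1 ha3T))
      have ha31 : a3 - a1 = 2*τ := by rw [ha1d, ha3d]; ring
      have hsplit : ∫ s in a1..a3, ‖g s‖^2
          = (∫ s in a1..a2, ‖g s‖^2) + ∫ s in a2..a3, ‖g s‖^2 :=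
        (intervalIntegral.integral_add_adjacent_intervals
          (hgsqI a1 a2 ha1 h12 ha2T) (hgsqI a2 a3 (ha1.trans h12) h23 ha3T)).symm
      have hc2 : ((k-2:ℕ):ℝ) = (k:ℝ)-2 := by
        rw [Nat.cast_sub hk2]; norm_num
      have hAk2 : A (k-2) = ∫ s in a1..a2, ‖g s‖^2 := by
        simp only [hA, hc2, ha1d, ha2d]
        rw [show ((k:ℝ)-2+1)*τ = ((k:ℝ)-1)*τ by ring]
      rw [hsmul, if_neg (by omega : ¬ k = 1), hAk1, hAk2]
      rw [div_le_iff₀ hτ0]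
      have hsq' : ‖fk k - fk (k-1)‖^2 ≤ C^2 := pow_le_pow_left₀ (norm_nonneg _) hΔle 2
      have hI1 : 0 ≤ ∫ s in a1..a2, ‖g s‖^2 :=
        intervalIntegral.integral_nonneg h12 fun _ _ => sq_nonneg _
      have hI2 : 0 ≤ ∫ s in a2..a3, ‖g s‖^2 :=
        intervalIntegral.integral_nonneg h23 fun _ _ => sq_nonneg _
      nlinarith
  -- total of A over range m
  have hS : ∑ i ∈ Finset.range m, A i = ∫ s in (0:ℝ)..T, ‖g s‖^2 := by
    have h4 := intervalIntegral.sum_integral_adjacent_intervals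
      (a := fun i : ℕ => (i:ℝ)*τ) (μ := volume) (f := fun s => ‖g s‖^2) (n := m) ?_
    · rw [hA]
      have : ∀ i : ℕ, (((i:ℕ)+1 : ℕ):ℝ)*τ = ((i:ℝ)+1)*τ := by intro i; push_cast; ring
      simp only [this] at h4
      rw [h4]
      norm_num [hmτ]
    · intro i hi
      have hi' : (i:ℝ) + 1 ≤ (m:ℝ) := by exact_mod_cast Nat.succ_le_of_lt hi
      show IntervalIntegrable (fun s => ‖g s‖^2) volume ((i:ℝ)*τ) (((i+1:ℕ):ℝ)*τ)
      have hc : ((i+1:ℕ):ℝ) = (i:ℝ)+1 := by push_cast; ring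
      rw [hc]
      exact hgsqI _ _ (by positivity)
        (by nlinarith [Nat.cast_nonneg (α := ℝ) i]) (by nlinarith)
  have hSnn : 0 ≤ ∫ s in (0:ℝ)..T, ‖g s‖^2 := by
    rw [← hS]; exact Finset.sum_nonneg fun i _ => hA0 i
  -- assemble
  rw [Finset.mul_sum]
  have step1 : ∑ k ∈ Finset.Icc 1 m, τ * ‖(1/τ) • (fk k - fk (k-1))‖ ^ 2
      ≤ ∑ k ∈ Finset.Icc 1 m, 2 * ((if k = 1 then 0 else A (k-2)) + A (k-1)) :=
    Finset.sum_le_sum fun k hk =>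
      key k (Finset.mem_Icc.1 hk).1 (Finset.mem_Icc.1 hk).2
  have hsum1 : ∑ k ∈ Finset.Icc 1 m, A (k-1) = ∫ s in (0:ℝ)..T, ‖g s‖^2 := by
    rw [← Finset.Ico_add_one_right_eq_Icc, Finset.sum_Ico_eq_sum_range]
    simp only [Nat.add_sub_cancel_left, Nat.add_sub_cancel]
    exact hS
  have hsum2 : ∑ k ∈ Finset.Icc 1 m, (if k = 1 then 0 else A (k-2))
      ≤ ∫ s in (0:ℝ)..T, ‖g s‖^2 := by
    rw [← Finset.Ico_add_one_right_eq_Icc, Finset.sum_Ico_eq_sum_range, show m + 1 - 1 = m from rfl]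
    obtain ⟨n, rfl⟩ : ∃ n, m = n + 1 := ⟨m - 1, by omega⟩
    rw [Finset.sum_range_succ']
    have hterm : ∀ i : ℕ, (if 1 + (i+1) = 1 then (0:ℝ) else A (1 + (i+1) - 2)) = A i := by
      intro i
      rw [if_neg (by omega), show 1 + (i+1) - 2 = i from by omega]
    simp only [hterm]
    norm_num
    rw [← hS]
    exact Finset.sum_le_sum_of_subset_of_nonneg
      (Finset.range_subset_range.2 (Nat.le_succ n)) (fun i _ _ => hA0 i)
  calc ∑ k ∈ Finset.Icc 1 m, τ * ‖(1/τ) • (fk k - fk (k-1))‖ ^ 2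
      ≤ ∑ k ∈ Finset.Icc 1 m, 2 * ((if k = 1 then 0 else A (k-2)) + A (k-1)) := step1
    _ = 2 * ((∑ k ∈ Finset.Icc 1 m, (if k = 1 then 0 else A (k-2)))
          + ∑ k ∈ Finset.Icc 1 m, A (k-1)) := by
        rw [← Finset.mul_sum, ← Finset.sum_add_distrib]
    _ ≤ 2 * ((∫ s in (0:ℝ)..T, ‖g s‖^2) + ∫ s in (0:ℝ)..T, ‖g s‖^2) := by
        rw [hsum1]
        have := hsum2
        nlinarith
    _ = 4 * ∫ s in (0:ℝ)..T, ‖g s‖^2 := by ring
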